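/- If ŷ(t) = α ŷ(t+1) − [i(t) − rⁿ − α π(t+1)] for all t, with 0 < α < 1 and the sequences bounded, then ŷ(t) = −∑_{k=0}^∞ α^k [i(t+k) − rⁿ − α π(t+k+1)]; in particular current output depends on interest rates k periods ahead with weight α^k, which tends to 0 as k → ∞. -/

import Mathlib

open Filter

/-- Solving the discounted Euler equation forward: if
ŷ(t) = α ŷ(t+1) − [i(t) − rⁿ − α π(t+1)] with 0 < α < 1 and bounded
sequences, then ŷ(t) = −∑ₖ αᵏ [i(t+k) − rⁿ − α π(t+k+1)]; the weight αᵏ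
tends to 0 as k → ∞. -/
theorem stmt_13 (α rn : ℝ) (hα0 : 0 < α) (hα1 : α < 1)
    (i π yhat : ℕ → ℝ)
    (hib : ∃ C, ∀ t, |i t| ≤ C) (hπb : ∃ C, ∀ t, |π t| ≤ C)
    (hyb : ∃ C, ∀ t, |yhat t| ≤ C)
    (heuler : ∀ t, yhat t = α * yhat (t + 1) - (i t - rn - α * π (t + 1))) :
    (∀ t, yhat t = -∑' k : ℕ, α ^ k * (i (t + k) - rn - α * π (t + k + 1))) ∧
      Tendsto (fun k : ℕ => α ^ k) atTop (nhds 0) := by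
  have hαpow : Tendsto (fun k : ℕ => α ^ k) atTop (nhds 0) :=
    tendsto_pow_atTop_nhds_zero_of_lt_one hα0.le hα1
  refine ⟨fun t => ?_, hαpow⟩
  obtain ⟨Ci, hCi⟩ := hib
  obtain ⟨Cπ, hCπ⟩ := hπb
  obtain ⟨Cy, hCy⟩ := hyb
  set f : ℕ → ℝ := fun s => i s - rn - α * π (s + 1) with hf
  have hfb : ∀ s, |f s| ≤ Ci + |rn| + α * Cπ := by
    intro s
    have h1 : |i s - rn - α * π (s + 1)| ≤ |i s| + |rn| + |α * π (s + 1)| := by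
      calc |i s - rn - α * π (s + 1)| ≤ |i s - rn| + |α * π (s + 1)| := abs_sub _ _
        _ ≤ |i s| + |rn| + |α * π (s + 1)| := by
            have := abs_sub (i s) rn; linarith
    have h2 : |α * π (s + 1)| = α * |π (s + 1)| := by
      rw [abs_mul, abs_of_pos hα0]
    have h3 : α * |π (s + 1)| ≤ α * Cπ := by
      exact mul_le_mul_of_nonneg_left (hCπ _) hα0.le
    calc |f s| ≤ |i s| + |rn| + |α * π (s + 1)| := h1
      _ ≤ Ci + |rn| + α * Cπ := by rw [h2]; have := hCi s; linarith
  set C := Ci + |rn| + α * Cπ with hC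
  have hC0 : 0 ≤ C := le_trans (abs_nonneg _) (hfb 0)
  -- summability
  have hsum : Summable (fun k : ℕ => α ^ k * f (t + k)) := by
    apply Summable.of_norm
    have hg : Summable (fun k : ℕ => C * α ^ k) :=
      (summable_geometric_of_lt_one hα0.le hα1).mul_left C
    refine hg.of_nonneg_of_le (fun k => norm_nonneg _) (fun k => ?_)
    rw [Real.norm_eq_abs, abs_mul, abs_pow, abs_of_pos hα0]
    calc α ^ k * |f (t + k)| ≤ α ^ k * C :=
          mul_le_mul_of_nonneg_left (hfb _) (pow_nonneg hα0.le k)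
      _ = C * α ^ k := mul_comm _ _
  -- forward iteration identity
  have hiter : ∀ n : ℕ, yhat t = α ^ n * yhat (t + n) -
      ∑ k ∈ Finset.range n, α ^ k * f (t + k) := by
    intro n
    induction n with
    | zero => simp
    | succ n ih =>
      rw [ih, Finset.sum_range_succ]
      have hstep : yhat (t + n) = α * yhat (t + (n + 1)) - f (t + n) := by
        have := heuler (t + n)
        have harr : t + n + 1 = t + (n + 1) := by ring
        rw [harr] at this
        simpa [hf, add_assoc] using this
      rw [hstep]
      ring
  -- limits
  have h1 : Tendsto (fun n : ℕ => α ^ n * yhat (t + n)) atTop (nhds 0) := by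
    apply squeeze_zero_norm (a := fun n => Cy * α ^ n)
    · intro n
      rw [Real.norm_eq_abs, abs_mul, abs_pow, abs_of_pos hα0]
      calc α ^ n * |yhat (t + n)| ≤ α ^ n * Cy :=
            mul_le_mul_of_nonneg_left (hCy _) (pow_nonneg hα0.le n)
        _ = Cy * α ^ n := mul_comm _ _
    · simpa using hαpow.const_mul Cy
  have h2 : Tendsto (fun n : ℕ => ∑ k ∈ Finset.range n, α ^ k * f (t + k)) atTop
      (nhds (∑' k : ℕ, α ^ k * f (t + k))) := hsum.hasSum.tendsto_sum_nat
  have h3 : Tendsto (fun n : ℕ => α ^ n * yhat (t + n) -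
      ∑ k ∈ Finset.range n, α ^ k * f (t + k)) atTop
      (nhds (0 - ∑' k : ℕ, α ^ k * f (t + k))) := h1.sub h2
  have h4 : Tendsto (fun _ : ℕ => yhat t) atTop
      (nhds (0 - ∑' k : ℕ, α ^ k * f (t + k))) := by
    refine h3.congr fun n => (hiter n).symm
  have := tendsto_nhds_unique h4 tendsto_const_nhds
  rw [← this]; ring
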